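/- arXiv:math/9812067 — 2 statements merged into one kernel-verified Lean document; each statement's English description precedes it below -/
import Mathlib

section
/- Let B be the Minkowski bilinear form on ℝ³ given by B((x₁,y₁,z₁),(x₂,y₂,z₂)) = x₁x₂ + y₁y₂ − z₁z₂. Let θ ∈ ℝ and let v, a, b ∈ ℝ³ satisfy B(v,v) = B(a,a) = B(b,b) = 1, B(v,a)² = 1, B(v,b)² = 1, and B(v,a)·B(v,b)·B(a,b) = −cos θ. Set e = v − 2·B(v,a)·a and f = v − 2·B(v,b)·b. Then B(e,f) = −3 − 4·cos θ; in particular −B(e,f) = 3 + 4·cos θ, and if 0 < θ < π then −B(e,f) < 7. -/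
/-- The Minkowski bilinear form on `ℝ³`:
`B((x₁,y₁,z₁),(x₂,y₂,z₂)) = x₁x₂ + y₁y₂ − z₁z₂`. -/
def minkB (u w : Fin 3 → ℝ) : ℝ := u 0 * w 0 + u 1 * w 1 - u 2 * w 2

theorem reflection_inner_product_bound
    (θ : ℝ) (v a b : Fin 3 → ℝ)
    (hv : minkB v v = 1) (ha : minkB a a = 1) (hb : minkB b b = 1)
    (hva : (minkB v a) ^ 2 = 1) (hvb : (minkB v b) ^ 2 = 1)
    (hab : minkB v a * minkB v b * minkB a b = -Real.cos θ)
    (e f : Fin 3 → ℝ)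
    (he : e = v - (2 * minkB v a) • a)
    (hf : f = v - (2 * minkB v b) • b) :
    minkB e f = -3 - 4 * Real.cos θ ∧
      -minkB e f = 3 + 4 * Real.cos θ ∧
      (0 < θ → θ < Real.pi → -minkB e f < 7) := by
  subst he hf
  have key : minkB (v - (2 * minkB v a) • a) (v - (2 * minkB v b) • b)
      = -3 - 4 * Real.cos θ := by
    simp only [minkB, Pi.sub_apply, Pi.smul_apply, smul_eq_mul] at *
    linear_combination hv - 2*hva - 2*hvb + 4*hab
  refine ⟨key, by rw [key]; ring, fun h1 h2 => ?_⟩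
  rw [key]
  have : Real.cos θ < 1 := by
    rcases lt_or_eq_of_le (Real.cos_le_one θ) with h | h
    · exact h
    · have := (Real.cos_eq_one_iff_of_lt_of_lt (x := θ)
        (by nlinarith [Real.pi_pos]) (by nlinarith [Real.pi_pos])).1 h
      exact absurd this (ne_of_gt h1)
  linarith
end

section
/- Let n₀₁, n₀₂, n₀₃, n₁₂, n₂₃, n₃₁ be natural numbers, each at least 2, satisfying: (I) 1/n₀₁ + 1/n₀₂ + 1/n₁₂ > 1, 1/n₀₂ + 1/n₀₃ + 1/n₂₃ > 1, and 1/n₀₃ + 1/n₀₁ + 1/n₃₁ > 1 (as rational/real inequalities); and (II) 1/n₁₂ + 1/n₂₃ + 1/n₃₁ < 1. Then the multiset {n₀₁, n₀₂, n₀₃} is one of {2,2,2}, {2,2,3}, {2,2,4}, {2,2,5}, {2,3,3}. -/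
private lemma aux_inv_le (a n : ℕ) (hn : 0 < n) (h : n ≤ a) : (1:ℝ)/a ≤ 1/n := by
  apply one_div_le_one_div_of_le
  · exact_mod_cast hn
  · exact_mod_cast h

private lemma aux2 (a b x : ℕ) (ha : 2 ≤ a) (hb : 2 ≤ b) (hx : 5 < x)
    (h : (1:ℝ)/a + 1/x + 1/b > 1) : a = 2 ∧ b = 2 := by
  have hx6 : (1:ℝ)/x ≤ 1/6 := aux_inv_le x 6 (by norm_num) hx
  have ha2 : (1:ℝ)/a ≤ 1/2 := aux_inv_le a 2 (by norm_num) ha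
  have hb2 : (1:ℝ)/b ≤ 1/2 := aux_inv_le b 2 (by norm_num) hb
  constructor
  · by_contra hne
    have ha3 : (1:ℝ)/a ≤ 1/3 := aux_inv_le a 3 (by norm_num) (by omega)
    linarith
  · by_contra hne
    have hb3 : (1:ℝ)/b ≤ 1/3 := aux_inv_le b 3 (by norm_num) (by omega)
    linarith

private lemma nat_bound (m k : ℕ) (hk : 0 < k) (h : (1:ℝ)/k < 1/m) : m < k := by
  by_contra hc
  push_neg at hc
  have := aux_inv_le m k hk hc
  linarith

set_option maxHeartbeats 1600000 in
theorem triangular_face_angle_classification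
    (n01 n02 n03 n12 n23 n31 : ℕ)
    (h01 : 2 ≤ n01) (h02 : 2 ≤ n02) (h03 : 2 ≤ n03)
    (h12 : 2 ≤ n12) (h23 : 2 ≤ n23) (h31 : 2 ≤ n31)
    (hI1 : (1 : ℝ) / n01 + 1 / n02 + 1 / n12 > 1)
    (hI2 : (1 : ℝ) / n02 + 1 / n03 + 1 / n23 > 1)
    (hI3 : (1 : ℝ) / n03 + 1 / n01 + 1 / n31 > 1)
    (hII : (1 : ℝ) / n12 + 1 / n23 + 1 / n31 < 1) :
    ({n01, n02, n03} : Multiset ℕ) = {2, 2, 2} ∨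
    ({n01, n02, n03} : Multiset ℕ) = {2, 2, 3} ∨
    ({n01, n02, n03} : Multiset ℕ) = {2, 2, 4} ∨
    ({n01, n02, n03} : Multiset ℕ) = {2, 2, 5} ∨
    ({n01, n02, n03} : Multiset ℕ) = {2, 3, 3} := by
  have hS : (1:ℝ)/n01 + 1/n02 + 1/n03 > 1 := by linarith
  have pos12 : (0:ℝ) ≤ 1/n12 := by positivity
  have pos23 : (0:ℝ) ≤ 1/n23 := by positivity
  have pos31 : (0:ℝ) ≤ 1/n31 := by positivity
  have hb1 : n01 ≤ 5 := by
    by_contra h; push_neg at h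
    obtain ⟨e1, e2⟩ := aux2 n02 n12 n01 h02 h12 h (by linarith)
    obtain ⟨e3, e4⟩ := aux2 n03 n31 n01 h03 h31 h hI3
    subst e2; subst e4
    push_cast at hII; linarith
  have hb2 : n02 ≤ 5 := by
    by_contra h; push_neg at h
    obtain ⟨e1, e2⟩ := aux2 n01 n12 n02 h01 h12 h hI1
    obtain ⟨e3, e4⟩ := aux2 n03 n23 n02 h03 h23 h (by linarith)
    subst e2; subst e4
    push_cast at hII; linarith
  have hb3 : n03 ≤ 5 := by
    by_contra h; push_neg at h
    obtain ⟨e1, e2⟩ := aux2 n02 n23 n03 h02 h23 h hI2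
    obtain ⟨e3, e4⟩ := aux2 n01 n31 n03 h01 h31 h (by linarith)
    subst e2; subst e4
    push_cast at hII; linarith
  interval_cases n01 <;> interval_cases n02 <;> interval_cases n03 <;>
    first
    | (left; decide)
    | (right; left; decide)
    | (right; right; left; decide)
    | (right; right; right; left; decide)
    | (right; right; right; right; decide)
    | (exfalso; revert hS; norm_num; done)
    | (push_cast at hI1 hI2 hI3
       have b1 : n12 < 6 := nat_bound n12 6 (by norm_num) (by push_cast; linarith)
       have b2 : n23 < 6 := nat_bound n23 6 (by norm_num) (by push_cast; linarith)
       have b3 : n31 < 6 := nat_bound n31 6 (by norm_num) (by push_cast; linarith)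
       interval_cases n12 <;> interval_cases n23 <;> interval_cases n31 <;>
         (revert hII hI1 hI2 hI3; norm_num))
end
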